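/- For every natural number n, the 1/2-binomial coefficient satisfies [(2n) 1] = 2^(2n+1)/(π · C(2n, n)), where C(2n, n) is the central binomial coefficient. -/

import Mathlib

open scoped Real Classical

/-- The generalized β-binomial coefficient `[n k]_β`:
`Γ(βn+1)/(Γ(βk+1)·Γ(β(n−k)+1))` when `β(n−k)` is not an integer `≤ -1`, else `0`. -/
noncomputable def bbinom (β : ℝ) (n : ℕ) (k : ℤ) : ℝ :=
  if ∃ m : ℤ, m ≤ -1 ∧ β * ((n : ℝ) - (k : ℝ)) = (m : ℝ) then 0
  else Real.Gamma (β * n + 1) /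
    (Real.Gamma (β * k + 1) * Real.Gamma (β * ((n : ℝ) - (k : ℝ)) + 1))

/-- The 1/2-binomial coefficient. -/
noncomputable def bhalf (n : ℕ) (k : ℤ) : ℝ := bbinom (1/2) n k

lemma gamma_half : Real.Gamma (1/2 + 1) = Real.sqrt π / 2 := by
  rw [Real.Gamma_add_one (by norm_num), Real.Gamma_one_half_eq]
  ring

lemma gamma_nat_half (n : ℕ) :
    Real.Gamma ((n : ℝ) + 1/2) = Real.sqrt π * (2*n).factorial / (4^n * n.factorial) := by
  induction n with
  | zero => norm_num [Real.Gamma_one_half_eq]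
  | succ n ih =>
    have h : ((n+1 : ℕ) : ℝ) + 1/2 = ((n : ℝ) + 1/2) + 1 := by push_cast; ring
    rw [h, Real.Gamma_add_one (by positivity), ih]
    have h2 : (2*(n+1)) = (2*n+1)+1 := by ring
    rw [h2]
    have e1 : (((2*n+1)+1).factorial : ℝ) = ((2*n+1)+1) * (2*n+1) * (2*n).factorial := by
      rw [Nat.factorial_succ, Nat.factorial_succ]; push_cast; ring
    rw [e1, Nat.factorial_succ]
    have hn : (n.factorial : ℝ) ≠ 0 := by positivity
    field_simp
-- (cast ok)
    push_cast; ring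

theorem bhalf_even_one (n : ℕ) :
    bhalf (2 * n) 1 = 2 ^ (2 * n + 1) / (π * (Nat.choose (2 * n) n : ℝ)) := by
  rw [bhalf, bbinom, if_neg]
  · have e1 : (1/2 : ℝ) * (2*n : ℕ) + 1 = (n : ℝ) + 1 := by push_cast; ring
    have e2 : (1/2 : ℝ) * ((1:ℤ) : ℝ) + 1 = 1/2 + 1 := by norm_num
    have e3 : (1/2 : ℝ) * (((2*n : ℕ) : ℝ) - ((1:ℤ) : ℝ)) + 1 = (n : ℝ) + 1/2 := by
      push_cast; ring
    rw [e1, e2, e3, gamma_half, gamma_nat_half]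
    rw [Real.Gamma_nat_eq_factorial]
    have hch : ((2*n).choose n : ℝ) * n.factorial * n.factorial = (2*n).factorial := by
      have h := Nat.choose_mul_factorial_mul_factorial (show n ≤ 2*n by omega)
      rw [show 2*n-n=n from by omega] at h
      exact_mod_cast h
    have hπ : Real.sqrt π * Real.sqrt π = π := Real.mul_self_sqrt Real.pi_pos.le
    have hc : ((2*n).choose n : ℝ) ≠ 0 := Nat.cast_ne_zero.mpr (Nat.choose_pos (by omega)).ne'
    have hf : (n.factorial : ℝ) ≠ 0 := by positivity
    have h2f : ((2*n).factorial : ℝ) ≠ 0 := by positivity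
    have hsπ : Real.sqrt π ≠ 0 := by positivity
    field_simp
    rw [← hch]
-- (cast ok)
    ring_nf
    rw [Real.sq_sqrt Real.pi_pos.le, show (4:ℝ)^n = 2^(2*n) by
      rw [show (4:ℝ)=2^2 by norm_num, ← pow_mul]]
    ring
  · rintro ⟨m, hm, h⟩
    have : ((1:ℤ):ℝ) = 1 := by norm_num
    rw [this] at h
    have h1 : (m : ℝ) ≤ -1 := by exact_mod_cast hm
    have h2 : (0:ℝ) ≤ (n:ℝ) := Nat.cast_nonneg n
    push_cast at h
    nlinarith
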